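/- If two bounded real measures $\mu, \mu'$ on $\Xi = S^{d-1}\times\mathbb{R}$ satisfy $\mu = \mu' + p$ as tempered distributions, where $p$ is a polynomial in the variable $t$ (i.e., they define the same Lizorkin distribution), then $\mu = \mu'$ as measures. -/

import Mathlib

open scoped NNReal


open MeasureTheory

/-- Euclidean space `ℝ^d`. -/
abbrev E (d : ℕ) := EuclideanSpace ℝ (Fin d)

/-- The unit sphere `S^{d-1} ⊆ ℝ^d`. -/
abbrev Sph (d : ℕ) := Metric.sphere (0 : E d) 1

/-- The parameter space `Ξ = S^{d-1} × ℝ`. -/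
abbrev Xi (d : ℕ) := Sph d × ℝ

/-- Integral of a real function against a bounded signed measure. -/
noncomputable def sInt {Θ : Type*} [MeasurableSpace Θ] (μ : SignedMeasure Θ) (f : Θ → ℝ) : ℝ :=
  (∫ θ, f θ ∂μ.toJordanDecomposition.posPart) - ∫ θ, f θ ∂μ.toJordanDecomposition.negPart

/- ## Auxiliary: plateau functions -/

/-- A continuous plateau: `0 ≤ plateau a b t ≤ 1`, equal to `1` on `[a+1, b]` and vanishing
outside `[a, b+1]`. -/
noncomputable def plateau (a b t : ℝ) : ℝ := max 0 (min (t - a) (min 1 (b + 1 - t)))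

lemma plateau_continuous (a b : ℝ) : Continuous (plateau a b) := by
  unfold plateau; fun_prop

lemma plateau_nonneg (a b t : ℝ) : 0 ≤ plateau a b t := le_max_left _ _

lemma plateau_le_one (a b t : ℝ) : plateau a b t ≤ 1 :=
  max_le zero_le_one (le_trans (min_le_right _ _) (min_le_left _ _))

lemma plateau_eq_zero {a b t : ℝ} (h : t ∉ Set.Icc a (b + 1)) : plateau a b t = 0 := by
  unfold plateau
  rw [Set.mem_Icc, not_and_or, not_le, not_le] at h
  rcases h with h | h
  · exact max_eq_left (le_trans (min_le_left _ _) (by linarith))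
  · exact max_eq_left (le_trans (le_trans (min_le_right _ _) (min_le_right _ _)) (by linarith))

lemma plateau_eq_one {a b t : ℝ} (h1 : a + 1 ≤ t) (h2 : t ≤ b) : plateau a b t = 1 := by
  unfold plateau
  rw [min_eq_left (by linarith : (1:ℝ) ≤ b + 1 - t), min_eq_right (by linarith : (1:ℝ) ≤ t - a)]
  exact max_eq_right zero_le_one

lemma plateau_abs_le_one (a b t : ℝ) : ‖plateau a b t‖ ≤ 1 := by
  rw [Real.norm_eq_abs, abs_le]
  exact ⟨by linarith [plateau_nonneg a b t], plateau_le_one a b t⟩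

lemma plateau_hasCompactSupport (a b : ℝ) : HasCompactSupport (plateau a b) :=
  HasCompactSupport.intro isCompact_Icc fun _ hx => plateau_eq_zero hx

/- ## Auxiliary: eventual sign-definiteness of a nonzero polynomial -/

lemma poly_sign {p : Polynomial ℝ} (hp : p ≠ 0) :
    ∃ c T : ℝ, 0 < c ∧
      ((∀ t, T ≤ t → c ≤ p.eval t) ∨ (∀ t, T ≤ t → p.eval t ≤ -c)) := by
  rcases le_or_gt p.degree 0 with hd | hd
  · have hC : p = Polynomial.C (p.coeff 0) := Polynomial.eq_C_of_degree_le_zero hd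
    have hc0 : p.coeff 0 ≠ 0 := fun h => hp (by rw [hC, h, map_zero])
    rcases hc0.lt_or_gt with hneg | hpos
    · exact ⟨-p.coeff 0, 0, by linarith, Or.inr fun t _ => by rw [hC]; simp⟩
    · exact ⟨p.coeff 0, 0, hpos, Or.inl fun t _ => by rw [hC]; simp⟩
  · rcases le_total 0 p.leadingCoeff with hl | hl
    · have ht := Polynomial.tendsto_atTop_of_leadingCoeff_nonneg p hd hl
      obtain ⟨T, hT⟩ := (ht.eventually_ge_atTop 1).exists_forall_of_atTop
      exact ⟨1, T, one_pos, Or.inl fun t h => hT t h⟩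
    · have ht := Polynomial.tendsto_atBot_of_leadingCoeff_nonpos p hd hl
      obtain ⟨T, hT⟩ := (ht.eventually_le_atBot (-1)).exists_forall_of_atTop
      exact ⟨1, T, one_pos, Or.inr fun t h => hT t h⟩

/- ## Auxiliary: pairing of an eventually-positive polynomial with a plateau function -/

lemma poly_plateau_cont (p : Polynomial ℝ) (a b : ℝ) :
    Continuous fun t => Polynomial.eval t p * plateau a b t :=
  (Polynomial.continuous p).mul (plateau_continuous a b)

lemma plateau_pairing_lb {p : Polynomial ℝ} {c T : ℝ} (hc : 0 < c) {L : ℝ} (hL : 0 ≤ L)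
    (hsign : ∀ t, T ≤ t → c ≤ p.eval t) :
    c * L ≤ ∫ t : ℝ, Polynomial.eval t p * plateau T (T + 1 + L) t := by
  set f : ℝ → ℝ := fun t => Polynomial.eval t p * plateau T (T + 1 + L) t with hf
  have hfc : Continuous f := poly_plateau_cont p T (T + 1 + L)
  have hfs : HasCompactSupport f :=
    (plateau_hasCompactSupport T (T + 1 + L)).mul_left
  have hfi : Integrable f := hfc.integrable_of_hasCompactSupport hfs
  have hf0 : ∀ t, 0 ≤ f t := by
    intro t
    rcases lt_or_ge t T with hlt | hge
    · have h0 : plateau T (T + 1 + L) t = 0 :=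
        plateau_eq_zero (by rw [Set.mem_Icc]; push_neg; intro h'; linarith)
      simp [hf, h0]
    · exact mul_nonneg (le_trans hc.le (hsign t hge)) (plateau_nonneg _ _ _)
  have step1 : ∫ t in Set.Icc (T + 1) (T + 1 + L), f t ≤ ∫ t, f t :=
    setIntegral_le_integral hfi (Filter.Eventually.of_forall hf0)
  have step2 : c * (volume (Set.Icc (T + 1) (T + 1 + L))).toReal
      ≤ ∫ t in Set.Icc (T + 1) (T + 1 + L), f t := by
    apply setIntegral_ge_of_const_le_real measurableSet_Icc measure_Icc_lt_top.ne
    · intro x hx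
      rw [Set.mem_Icc] at hx
      have h1 : plateau T (T + 1 + L) x = 1 := plateau_eq_one hx.1 hx.2
      have h2 : c ≤ Polynomial.eval x p := hsign x (by linarith [hx.1])
      simp only [hf, h1, mul_one]
      exact h2
    · exact hfi.integrableOn
  have hvol : (volume (Set.Icc (T + 1) (T + 1 + L))).toReal = L := by
    rw [Real.volume_Icc, ENNReal.toReal_ofReal (by linarith)]
    ring
  rw [hvol] at step2
  linarith

/- ## Auxiliary: finite measures on `Ξ` agreeing on compactly supported continuous functions
are equal -/

lemma finiteMeasure_ext {d : ℕ} (ν₁ ν₂ : Measure (Xi d)) [IsFiniteMeasure ν₁]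
    [IsFiniteMeasure ν₂]
    (h : ∀ ψ : Xi d → ℝ, Continuous ψ → HasCompactSupport ψ →
      ∫ x, ψ x ∂ν₁ = ∫ x, ψ x ∂ν₂) : ν₁ = ν₂ := by
  -- first extend the hypothesis to bounded continuous functions, by truncation
  have hbc : ∀ g : Xi d → ℝ, Continuous g → ∀ Cg : ℝ, (∀ x, ‖g x‖ ≤ Cg) →
      ∫ x, g x ∂ν₁ = ∫ x, g x ∂ν₂ := by
    intro g hg Cg hCg
    set χ : ℕ → Xi d → ℝ := fun k x => plateau (-(k : ℝ) - 1) (k : ℝ) x.2 with hχ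
    have hχcont : ∀ k, Continuous (χ k) := fun k =>
      (plateau_continuous _ _).comp continuous_snd
    have hχsupp : ∀ k, HasCompactSupport (χ k) := by
      intro k
      apply HasCompactSupport.intro
        (isCompact_univ.prod (isCompact_Icc (a := -(k:ℝ) - 1) (b := (k:ℝ) + 1)))
      intro x hx
      apply plateau_eq_zero
      intro hmem
      exact hx ⟨Set.mem_univ _, hmem⟩
    have hgk_cont : ∀ k, Continuous (fun x => g x * χ k x) := fun k => hg.mul (hχcont k)
    have hgk_supp : ∀ k, HasCompactSupport (fun x => g x * χ k x) := fun k =>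
      (hχsupp k).mul_left
    have hconv : ∀ x : Xi d, Filter.Tendsto (fun k : ℕ => g x * χ k x) Filter.atTop
        (nhds (g x)) := by
      intro x
      apply Filter.Tendsto.congr' _ tendsto_const_nhds
      filter_upwards [Filter.eventually_ge_atTop ⌈|x.2|⌉₊] with k hk
      have habs : |x.2| ≤ (k : ℝ) := le_trans (Nat.le_ceil _) (by exact_mod_cast hk)
      have h1 : χ k x = 1 := by
        apply plateau_eq_one
        · have := (abs_le.mp habs).1; linarith
        · exact (abs_le.mp habs).2
      rw [h1, mul_one]
    have hint : ∀ (ν : Measure (Xi d)), IsFiniteMeasure ν →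
        Filter.Tendsto (fun k : ℕ => ∫ x, g x * χ k x ∂ν) Filter.atTop
          (nhds (∫ x, g x ∂ν)) := by
      intro ν _
      apply tendsto_integral_of_dominated_convergence (fun _ => Cg)
      · exact fun k => ((hgk_cont k).aestronglyMeasurable)
      · exact integrable_const Cg
      · intro k
        apply Filter.Eventually.of_forall
        intro x
        calc ‖g x * χ k x‖ = ‖g x‖ * ‖χ k x‖ := norm_mul _ _
          _ ≤ Cg * 1 :=
              mul_le_mul (hCg x) (plateau_abs_le_one _ _ _) (norm_nonneg _)
                (le_trans (norm_nonneg _) (hCg x))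
          _ = Cg := mul_one Cg
      · exact Filter.Eventually.of_forall hconv
    have heq : ∀ k : ℕ, ∫ x, g x * χ k x ∂ν₁ = ∫ x, g x * χ k x ∂ν₂ := fun k =>
      h _ (hgk_cont k) (hgk_supp k)
    have h1 := hint ν₁ inferInstance
    have h2 := hint ν₂ inferInstance
    rw [show (fun k : ℕ => ∫ x, g x * χ k x ∂ν₁) = fun k : ℕ => ∫ x, g x * χ k x ∂ν₂
      from funext heq] at h1
    exact tendsto_nhds_unique h1 h2
  -- now use the standard uniqueness result for bounded continuous `ℝ≥0`-valued functions
  apply ext_of_forall_lintegral_eq_of_IsFiniteMeasure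
  intro f
  have lip : LipschitzWith 1 ((↑·) : ℝ≥0 → ℝ) := isometry_subtype_coe.lipschitz
  set F : BoundedContinuousFunction (Xi d) ℝ := BoundedContinuousFunction.comp _ lip f with hF
  have hFx : ∀ x, F x = ((f x : ℝ≥0) : ℝ) := fun x => rfl
  have hgbd : ∀ x, ‖F x‖ ≤ ‖F‖ := fun x => F.norm_coe_le_norm x
  have hgint : ∀ (ν : Measure (Xi d)), IsFiniteMeasure ν →
      Integrable (fun x => ((f x : ℝ≥0) : ℝ)) ν := by
    intro ν _
    exact Integrable.mono' (integrable_const ‖F‖) (F.continuous.aestronglyMeasurable)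
      (Filter.Eventually.of_forall hgbd)
  rw [lintegral_coe_eq_integral _ (hgint ν₁ inferInstance),
    lintegral_coe_eq_integral _ (hgint ν₂ inferInstance)]
  congr 1
  exact hbc _ (continuous_subtype_val.comp f.continuous) ‖F‖ hgbd

/-- if two bounded real measures `μ, μ'` on `Ξ = S^{d-1} × ℝ` differ, as
distributions, by a polynomial in the variable `t` (i.e. they pair with all test functions up
to the pairing of the polynomial density `p(t) dt dn`), then `μ = μ'` as measures: no nonzero
polynomial is a bounded measure. -/
theorem stmt_13 (d : ℕ) (μ μ' : SignedMeasure (Xi d))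
    (σ : Measure (Sph d)) [IsFiniteMeasure σ] (p : Polynomial ℝ)
    (h : ∀ ψ : Xi d → ℝ, Continuous ψ → HasCompactSupport ψ →
      sInt μ ψ = sInt μ' ψ + ∫ n : Sph d, (∫ t : ℝ, Polynomial.eval t p * ψ (n, t)) ∂σ) :
    μ = μ' := by
  classical
  -- uniform bound on pairings of functions bounded by 1
  set M : ℝ := ((μ.toJordanDecomposition.posPart Set.univ).toReal
      + (μ.toJordanDecomposition.negPart Set.univ).toReal)
      + ((μ'.toJordanDecomposition.posPart Set.univ).toReal
      + (μ'.toJordanDecomposition.negPart Set.univ).toReal) with hM_def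
  have hM0 : 0 ≤ M := by
    rw [hM_def]
    positivity
  have hMb : ∀ ψ : Xi d → ℝ, (∀ x, ‖ψ x‖ ≤ 1) → |sInt μ ψ - sInt μ' ψ| ≤ M := by
    intro ψ hψ
    have hb : ∀ (ν : Measure (Xi d)), IsFiniteMeasure ν →
        |∫ x, ψ x ∂ν| ≤ (ν Set.univ).toReal := by
      intro ν _
      have h1 := norm_integral_le_of_norm_le_const (μ := ν) (f := ψ) (C := 1)
        (Filter.Eventually.of_forall hψ)
      rwa [one_mul, Real.norm_eq_abs] at h1
    have b1 := hb μ.toJordanDecomposition.posPart inferInstance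
    have b2 := hb μ.toJordanDecomposition.negPart inferInstance
    have b3 := hb μ'.toJordanDecomposition.posPart inferInstance
    have b4 := hb μ'.toJordanDecomposition.negPart inferInstance
    rw [abs_le] at b1 b2 b3 b4 ⊢
    unfold sInt
    constructor <;> linarith [b1.1, b1.2, b2.1, b2.2, b3.1, b3.2, b4.1, b4.2]
  -- Step 1: the polynomial term must vanish, i.e. `p = 0` or `σ = 0`.
  have main : p ≠ 0 → σ ≠ 0 → False := by
    intro hp hσ
    obtain ⟨c, T, hc, hsign⟩ := poly_sign hp
    set s : ℝ := (σ Set.univ).toReal with hs_def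
    have hs : 0 < s := ENNReal.toReal_pos
      (fun h0 => hσ (Measure.measure_univ_eq_zero.mp h0)) (measure_ne_top _ _)
    set L : ℝ := (M + 1) / (s * c) with hL_def
    have hL : 0 ≤ L := div_nonneg (by linarith) (by positivity)
    have hscL : s * (c * L) = M + 1 := by
      rw [hL_def]
      field_simp
    have hψc : Continuous fun x : Xi d => plateau T (T + 1 + L) x.2 :=
      (plateau_continuous _ _).comp continuous_snd
    have hψs : HasCompactSupport fun x : Xi d => plateau T (T + 1 + L) x.2 := by
      apply HasCompactSupport.intro
        (isCompact_univ.prod (isCompact_Icc (a := T) (b := T + 1 + L + 1)))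
      intro x hx
      apply plateau_eq_zero
      intro hmem
      exact hx ⟨Set.mem_univ _, hmem⟩
    have hb' := h _ hψc hψs
    have hb : sInt μ (fun x : Xi d => plateau T (T + 1 + L) x.2)
        = sInt μ' (fun x : Xi d => plateau T (T + 1 + L) x.2)
          + ∫ _n : Sph d, (∫ t : ℝ, Polynomial.eval t p * plateau T (T + 1 + L) t) ∂σ := hb'
    rw [integral_const] at hb
    set I : ℝ := ∫ t : ℝ, Polynomial.eval t p * plateau T (T + 1 + L) t with hI_def
    have hdiff : sInt μ (fun x : Xi d => plateau T (T + 1 + L) x.2)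
        - sInt μ' (fun x : Xi d => plateau T (T + 1 + L) x.2) = s * I := by
      rw [hb]; rw [smul_eq_mul]; rw [hs_def, Measure.real]; ring
    have habs := hMb (fun x : Xi d => plateau T (T + 1 + L) x.2)
      (fun x => plateau_abs_le_one _ _ _)
    rw [hdiff, abs_le] at habs
    rcases hsign with hsign | hsign
    · have hIlb : c * L ≤ I := plateau_pairing_lb hc hL hsign
      have : s * (c * L) ≤ s * I := by
        apply mul_le_mul_of_nonneg_left hIlb hs.le
      linarith [habs.2]
    · have hsign' : ∀ t, T ≤ t → c ≤ (-p).eval t := by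
        intro t ht
        rw [Polynomial.eval_neg]
        linarith [hsign t ht]
      have hIlb : c * L ≤ ∫ t : ℝ, Polynomial.eval t (-p) * plateau T (T + 1 + L) t :=
        plateau_pairing_lb hc hL hsign'
      have hneg : (∫ t : ℝ, Polynomial.eval t (-p) * plateau T (T + 1 + L) t) = -I := by
        rw [hI_def, ← integral_neg]
        congr 1
        funext t
        rw [Polynomial.eval_neg, neg_mul]
      rw [hneg] at hIlb
      have : s * (c * L) ≤ s * (-I) := mul_le_mul_of_nonneg_left hIlb hs.le
      linarith [habs.1]
  -- Step 2: the pairings agree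
  have key : ∀ ψ : Xi d → ℝ, Continuous ψ → HasCompactSupport ψ → sInt μ ψ = sInt μ' ψ := by
    intro ψ hcψ hsψ
    have hb := h ψ hcψ hsψ
    rcases eq_or_ne p 0 with hp | hp
    · simpa [hp] using hb
    · rcases eq_or_ne σ 0 with hσ | hσ
      · rw [hσ] at hb
        simpa using hb
      · exact (main hp hσ).elim
  -- Step 3: equality of the Jordan parts
  have hmeas : μ.toJordanDecomposition.posPart + μ'.toJordanDecomposition.negPart
      = μ'.toJordanDecomposition.posPart + μ.toJordanDecomposition.negPart := by
    apply finiteMeasure_ext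
    intro ψ hcψ hsψ
    have hiA : Integrable ψ μ.toJordanDecomposition.posPart :=
      hcψ.integrable_of_hasCompactSupport hsψ
    have hiB : Integrable ψ μ.toJordanDecomposition.negPart :=
      hcψ.integrable_of_hasCompactSupport hsψ
    have hiC : Integrable ψ μ'.toJordanDecomposition.posPart :=
      hcψ.integrable_of_hasCompactSupport hsψ
    have hiD : Integrable ψ μ'.toJordanDecomposition.negPart :=
      hcψ.integrable_of_hasCompactSupport hsψ
    rw [integral_add_measure hiA hiD, integral_add_measure hiC hiB]
    have hk := key ψ hcψ hsψ
    unfold sInt at hk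
    linarith
  have h2 : (μ.toJordanDecomposition.posPart + μ'.toJordanDecomposition.negPart).toSignedMeasure
      = (μ'.toJordanDecomposition.posPart + μ.toJordanDecomposition.negPart).toSignedMeasure := by
    congr 1
  rw [Measure.toSignedMeasure_add, Measure.toSignedMeasure_add] at h2
  have e1 : μ = μ.toJordanDecomposition.posPart.toSignedMeasure
      - μ.toJordanDecomposition.negPart.toSignedMeasure :=
    (μ.toSignedMeasure_toJordanDecomposition).symm
  have e2 : μ' = μ'.toJordanDecomposition.posPart.toSignedMeasure
      - μ'.toJordanDecomposition.negPart.toSignedMeasure :=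
    (μ'.toSignedMeasure_toJordanDecomposition).symm
  rw [e1, e2]
  exact sub_eq_sub_iff_add_eq_add.mpr h2
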